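/- arXiv:2004.12683 — 3 statements merged into one kernel-verified Lean document; each statement's English description precedes it below -/
import Mathlib

section
/- Let G be a graph and let X₁, X₂ ⊆ V(G) with X₁ ∪ X₂ = V(G) such that X := X₁ ∩ X₂ separates X₁ from X₂ (every path from X₁ to X₂ passes through X). Then the minimum size of an edge clique cover of G is at least (minimum edge clique cover of G[X₁]) + (minimum edge clique cover of G[X₂]) − C(|X|,2). -/
/-- An edge clique cover of a graph: a family of vertex subsets, each inducing a clique,
such that every edge has both endpoints in some member. -/
def IsEdgeCliqueCover {α : Type*} (G : SimpleGraph α) (S : Finset (Finset α)) : Prop :=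
  (∀ C ∈ S, G.IsClique (↑C : Set α)) ∧
  (∀ u v : α, G.Adj u v → ∃ C ∈ S, u ∈ C ∧ v ∈ C)

/-- The minimum size of an edge clique cover. -/
noncomputable def eccNum {α : Type*} (G : SimpleGraph α) : ℕ :=
  sInf {n | ∃ S : Finset (Finset α), IsEdgeCliqueCover G S ∧ S.card = n}

lemma ecc_exists {V : Type*} [Fintype V] [DecidableEq V] (G : SimpleGraph V) :
    ∃ S : Finset (Finset V), IsEdgeCliqueCover G S ∧ S.card = eccNum G := by
  classical
  have hne : {n | ∃ S : Finset (Finset V), IsEdgeCliqueCover G S ∧ S.card = n}.Nonempty := by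
    refine ⟨_, (Finset.univ.filter (fun p : V × V => G.Adj p.1 p.2)).image
      (fun p => ({p.1, p.2} : Finset V)), ?_, rfl⟩
    constructor
    · intro C hC
      simp only [Finset.mem_image, Finset.mem_filter, Finset.mem_univ, true_and] at hC
      obtain ⟨⟨a, b⟩, hab, rfl⟩ := hC
      intro x hx y hy hxy
      simp only [Finset.coe_insert, Finset.coe_singleton, Set.mem_insert_iff,
        Set.mem_singleton_iff] at hx hy
      rcases hx with rfl | rfl <;> rcases hy with rfl | rfl
      · exact absurd rfl hxy
      · exact hab
      · exact hab.symm
      · exact absurd rfl hxy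
    · intro u v huv
      refine ⟨{u, v}, ?_, by simp, by simp⟩
      simp only [Finset.mem_image, Finset.mem_filter, Finset.mem_univ, true_and]
      exact ⟨(u, v), huv, rfl⟩
  obtain ⟨S, hS, hcard⟩ := Nat.sInf_mem hne
  exact ⟨S, hS, hcard⟩

lemma ecc_induce_le {V : Type*} [Fintype V] [DecidableEq V] (G : SimpleGraph V) (X : Finset V)
    (S : Finset (Finset V)) (hclique : ∀ C ∈ S, G.IsClique (↑C : Set V))
    (hsub : ∀ C ∈ S, C ⊆ X)
    (hcov : ∀ u v : V, G.Adj u v → u ∈ X → v ∈ X → ∃ C ∈ S, u ∈ C ∧ v ∈ C) :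
    eccNum (G.induce (↑X : Set V)) ≤ S.card := by
  classical
  set S' : Finset (Finset (↑X : Set V)) :=
    S.image (fun C => C.subtype (fun x => x ∈ (↑X : Set V))) with hS'
  have hcover : IsEdgeCliqueCover (G.induce (↑X : Set V)) S' := by
    constructor
    · intro C hC
      simp only [hS', Finset.mem_image] at hC
      obtain ⟨D, hD, rfl⟩ := hC
      intro u hu v hv huv
      simp only [Finset.mem_coe, Finset.mem_subtype] at hu hv
      have : G.Adj u.1 v.1 := hclique D hD (Finset.mem_coe.2 hu) (Finset.mem_coe.2 hv)
        (fun h => huv (Subtype.ext h))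
      exact this
    · intro u v huv
      have hadj : G.Adj u.1 v.1 := huv
      obtain ⟨C, hC, huC, hvC⟩ := hcov u.1 v.1 hadj (by exact_mod_cast u.2) (by exact_mod_cast v.2)
      refine ⟨C.subtype (fun x => x ∈ (↑X : Set V)), ?_, ?_, ?_⟩
      · exact Finset.mem_image_of_mem _ hC
      · simpa [Finset.mem_subtype] using huC
      · simpa [Finset.mem_subtype] using hvC
  have h1 : eccNum (G.induce (↑X : Set V)) ≤ S'.card :=
    Nat.sInf_le ⟨S', hcover, rfl⟩
  exact h1.trans (Finset.card_image_le)

/-- If `X₁ ∪ X₂ = V(G)` and `X = X₁ ∩ X₂` separates `X₁` from `X₂`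
(no edge between `X₁ \ X` and `X₂ \ X`), then
`eccNum G[X₁] + eccNum G[X₂] ≤ eccNum G + C(|X|,2)`. -/
theorem stmt_4 {V : Type*} [Fintype V] [DecidableEq V] (G : SimpleGraph V)
    (X₁ X₂ : Finset V) (hunion : X₁ ∪ X₂ = Finset.univ)
    (hsep : ∀ u v : V, G.Adj u v → u ∈ X₁ \ (X₁ ∩ X₂) → v ∉ X₂ \ (X₁ ∩ X₂)) :
    eccNum (G.induce (↑X₁ : Set V)) + eccNum (G.induce (↑X₂ : Set V)) ≤
      eccNum G + (X₁ ∩ X₂).card.choose 2 := by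
  classical
  obtain ⟨S, ⟨hcl, hcov⟩, hcard⟩ := ecc_exists G
  set X : Finset V := X₁ ∩ X₂ with hX
  -- every member of S lies in X₁ or in X₂
  have hmem12 : ∀ a : V, a ∈ X₁ ∨ a ∈ X₂ := by
    intro a
    have : a ∈ X₁ ∪ X₂ := by rw [hunion]; exact Finset.mem_univ a
    exact Finset.mem_union.mp this
  have hdich : ∀ C ∈ S, ¬ C ⊆ X₁ → C ⊆ X₂ := by
    intro C hC h1 b hbC
    obtain ⟨a, haC, haX1⟩ := Finset.not_subset.mp h1
    have haX2 : a ∈ X₂ := (hmem12 a).resolve_left haX1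
    by_contra hb2
    have hb1 : b ∈ X₁ := (hmem12 b).resolve_right hb2
    have hab : b ≠ a := fun h => haX1 (h ▸ hb1)
    have hAdj : G.Adj b a := hcl C hC (Finset.mem_coe.2 hbC) (Finset.mem_coe.2 haC) hab
    exact hsep b a hAdj (Finset.mem_sdiff.2 ⟨hb1, fun h => hb2 (Finset.mem_inter.mp h).2⟩)
      (Finset.mem_sdiff.2 ⟨haX2, fun h => haX1 (Finset.mem_inter.mp h).1⟩)
  set T₁ : Finset (Finset V) := S.filter (fun C => C ⊆ X₁) with hT₁
  set T₂ : Finset (Finset V) := S \ T₁ with hT₂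
  have hT₂sub : ∀ C ∈ T₂, C ⊆ X₂ := by
    intro C hC
    rw [hT₂, Finset.mem_sdiff] at hC
    exact hdich C hC.1 (fun h => hC.2 (Finset.mem_filter.2 ⟨hC.1, h⟩))
  set PX : Finset (Finset V) := Finset.powersetCard 2 X with hPX
  set P₁ : Finset (Finset V) :=
    PX.filter (fun p => G.IsClique (↑p : Set V) ∧ ¬ ∃ C ∈ T₁, p ⊆ C) with hP₁
  set P₂ : Finset (Finset V) :=
    PX.filter (fun p => G.IsClique (↑p : Set V) ∧ (∃ C ∈ T₁, p ⊆ C) ∧ ¬ ∃ C ∈ T₂, p ⊆ C) with hP₂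
  -- side 1 cover
  have hside1 : eccNum (G.induce (↑X₁ : Set V)) ≤ (T₁ ∪ P₁).card := by
    apply ecc_induce_le
    · intro C hC
      rcases Finset.mem_union.mp hC with h | h
      · exact hcl C (Finset.mem_filter.mp h).1
      · exact (Finset.mem_filter.mp h).2.1
    · intro C hC
      rcases Finset.mem_union.mp hC with h | h
      · exact (Finset.mem_filter.mp h).2
      · have := (Finset.mem_powersetCard.mp (Finset.mem_filter.mp h).1).1
        exact this.trans (Finset.inter_subset_left)
    · intro u v huv hu hv
      by_cases hex : ∃ C ∈ T₁, u ∈ C ∧ v ∈ C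
      · obtain ⟨C, hC, h⟩ := hex
        exact ⟨C, Finset.mem_union_left _ hC, h⟩
      · refine ⟨{u, v}, Finset.mem_union_right _ ?_, by simp, by simp⟩
        obtain ⟨C, hC, huC, hvC⟩ := hcov u v huv
        have hCT2 : C ∈ T₂ := by
          rw [hT₂, Finset.mem_sdiff]
          refine ⟨hC, fun hCT1 => hex ⟨C, hCT1, huC, hvC⟩⟩
        have hC2 : C ⊆ X₂ := hT₂sub C hCT2
        have huX : u ∈ X := Finset.mem_inter.2 ⟨hu, hC2 huC⟩
        have hvX : v ∈ X := Finset.mem_inter.2 ⟨hv, hC2 hvC⟩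
        rw [hP₁, Finset.mem_filter]
        refine ⟨Finset.mem_powersetCard.2 ⟨?_, ?_⟩, ?_, ?_⟩
        · intro x hx
          rcases Finset.mem_insert.mp hx with rfl | hx
          · exact huX
          · exact Finset.mem_singleton.mp hx ▸ hvX
        · rw [Finset.card_insert_of_notMem (by simp [huv.ne]), Finset.card_singleton]
        · intro x hx y hy hxy
          simp only [Finset.coe_insert, Finset.coe_singleton, Set.mem_insert_iff,
            Set.mem_singleton_iff] at hx hy
          rcases hx with rfl | rfl <;> rcases hy with rfl | rfl
          · exact absurd rfl hxy
          · exact huv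
          · exact huv.symm
          · exact absurd rfl hxy
        · rintro ⟨C', hC', hsub'⟩
          exact hex ⟨C', hC', hsub' (by simp), hsub' (by simp)⟩
  -- side 2 cover
  have hside2 : eccNum (G.induce (↑X₂ : Set V)) ≤ (T₂ ∪ P₂).card := by
    apply ecc_induce_le
    · intro C hC
      rcases Finset.mem_union.mp hC with h | h
      · exact hcl C (Finset.mem_sdiff.mp h).1
      · exact (Finset.mem_filter.mp h).2.1
    · intro C hC
      rcases Finset.mem_union.mp hC with h | h
      · exact hT₂sub C h
      · have := (Finset.mem_powersetCard.mp (Finset.mem_filter.mp h).1).1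
        exact this.trans (Finset.inter_subset_right)
    · intro u v huv hu hv
      by_cases hex : ∃ C ∈ T₂, u ∈ C ∧ v ∈ C
      · obtain ⟨C, hC, h⟩ := hex
        exact ⟨C, Finset.mem_union_left _ hC, h⟩
      · refine ⟨{u, v}, Finset.mem_union_right _ ?_, by simp, by simp⟩
        obtain ⟨C, hC, huC, hvC⟩ := hcov u v huv
        have hCT1 : C ∈ T₁ := by
          by_contra hCT1
          exact hex ⟨C, Finset.mem_sdiff.2 ⟨hC, hCT1⟩, huC, hvC⟩
        have hC1 : C ⊆ X₁ := (Finset.mem_filter.mp hCT1).2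
        have huX : u ∈ X := Finset.mem_inter.2 ⟨hC1 huC, hu⟩
        have hvX : v ∈ X := Finset.mem_inter.2 ⟨hC1 hvC, hv⟩
        rw [hP₂, Finset.mem_filter]
        refine ⟨Finset.mem_powersetCard.2 ⟨?_, ?_⟩, ?_, ?_, ?_⟩
        · intro x hx
          rcases Finset.mem_insert.mp hx with rfl | hx
          · exact huX
          · exact Finset.mem_singleton.mp hx ▸ hvX
        · rw [Finset.card_insert_of_notMem (by simp [huv.ne]), Finset.card_singleton]
        · intro x hx y hy hxy
          simp only [Finset.coe_insert, Finset.coe_singleton, Set.mem_insert_iff,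
            Set.mem_singleton_iff] at hx hy
          rcases hx with rfl | rfl <;> rcases hy with rfl | rfl
          · exact absurd rfl hxy
          · exact huv
          · exact huv.symm
          · exact absurd rfl hxy
        · refine ⟨C, hCT1, ?_⟩
          intro x hx
          rcases Finset.mem_insert.mp hx with rfl | hx
          · exact huC
          · exact Finset.mem_singleton.mp hx ▸ hvC
        · rintro ⟨C', hC', hsub'⟩
          exact hex ⟨C', hC', hsub' (by simp), hsub' (by simp)⟩
  -- cardinality bookkeeping
  have hTcard : T₁.card + T₂.card = S.card := by
    have hsub1 : T₁ ⊆ S := Finset.filter_subset _ _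
    have h1 := Finset.card_sdiff_of_subset hsub1
    have h2 := Finset.card_le_card hsub1
    rw [hT₂]
    omega
  have hPdisj : Disjoint P₁ P₂ := by
    rw [Finset.disjoint_left]
    intro p hp1 hp2
    exact (Finset.mem_filter.mp hp1).2.2 (Finset.mem_filter.mp hp2).2.2.1
  have hPcard : P₁.card + P₂.card ≤ X.card.choose 2 := by
    have : (P₁ ∪ P₂).card ≤ PX.card :=
      Finset.card_le_card (Finset.union_subset (Finset.filter_subset _ _) (Finset.filter_subset _ _))
    rw [Finset.card_union_of_disjoint hPdisj] at this
    rwa [hPX, Finset.card_powersetCard] at this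
  calc eccNum (G.induce (↑X₁ : Set V)) + eccNum (G.induce (↑X₂ : Set V))
      ≤ (T₁ ∪ P₁).card + (T₂ ∪ P₂).card := Nat.add_le_add hside1 hside2
    _ ≤ (T₁.card + P₁.card) + (T₂.card + P₂.card) :=
        Nat.add_le_add (Finset.card_union_le _ _) (Finset.card_union_le _ _)
    _ = (T₁.card + T₂.card) + (P₁.card + P₂.card) := by ring
    _ ≤ S.card + X.card.choose 2 := Nat.add_le_add (le_of_eq hTcard) hPcard
    _ = eccNum G + X.card.choose 2 := by rw [hcard]
end

section
/- Let G be a connected finite simple graph, X ⊆ V(G), and let G_X be the graph obtained from G by identifying all vertices of X into a single vertex z. Given a connected vertex cover S of G_X, the set obtained from S by replacing z with X is a vertex cover of G, and it can be augmented by at most |X| additional vertices to a connected vertex cover of G; hence cvc(G) ≤ cvc(G_X) + 2|X|. -/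
/-- The graph obtained from `G` by identifying all vertices of `X` into a single new
vertex `z` (represented by `none`). -/
def identify {V : Type*} [DecidableEq V] (G : SimpleGraph V) (X : Finset V) :
    SimpleGraph (Option {v : V // v ∉ X}) where
  Adj a b :=
    match a, b with
    | some u, some v => G.Adj ↑u ↑v
    | some u, none => ∃ x ∈ X, G.Adj ↑u x
    | none, some v => ∃ x ∈ X, G.Adj x ↑v
    | none, none => False
  symm := by
    constructor
    rintro (_ | u) (_ | v) h
    · exact h.elim
    · obtain ⟨x, hx, hadj⟩ := h
      exact ⟨x, hx, hadj.symm⟩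
    · obtain ⟨x, hx, hadj⟩ := h
      exact ⟨x, hx, hadj.symm⟩
    · exact h.symm
  loopless := by
    constructor
    rintro (_ | u) h
    · exact h
    · exact G.irrefl h

/-- The minimum size of a connected vertex cover of a graph. -/
noncomputable def cvcNum {α : Type*} (G : SimpleGraph α) : ℕ :=
  sInf {n | ∃ S : Finset α, (∀ u v : α, G.Adj u v → u ∈ S ∨ v ∈ S) ∧
    (G.induce (↑S : Set α)).Connected ∧ S.card = n}

open SimpleGraph

/-- A walk between `u` and `v` staying inside the finset `T`. -/
def WIn {V : Type*} (G : SimpleGraph V) (T : Finset V) (u v : V) : Prop :=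
  ∃ p : G.Walk u v, ∀ w ∈ p.support, w ∈ T

section WIn

variable {V : Type*} {G : SimpleGraph V} {T T' : Finset V} {u v w : V}

lemma WIn.refl (hu : u ∈ T) : WIn G T u u :=
  ⟨SimpleGraph.Walk.nil, by simpa using hu⟩

lemma WIn.trans (h1 : WIn G T u v) (h2 : WIn G T v w) : WIn G T u w := by
  obtain ⟨p, hp⟩ := h1
  obtain ⟨q, hq⟩ := h2
  exact ⟨p.append q, fun x hx => ((Walk.mem_support_append_iff _ _).1 hx).elim (hp _) (hq _)⟩

lemma WIn.symm (h : WIn G T u v) : WIn G T v u := by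
  obtain ⟨p, hp⟩ := h
  exact ⟨p.reverse, fun x hx => hp _ (by simpa [Walk.support_reverse] using hx)⟩

lemma WIn.left_mem (h : WIn G T u v) : u ∈ T := by
  obtain ⟨p, hp⟩ := h
  exact hp _ p.start_mem_support

lemma WIn.right_mem (h : WIn G T u v) : v ∈ T := by
  obtain ⟨p, hp⟩ := h
  exact hp _ p.end_mem_support

lemma WIn.mono (hT : T ⊆ T') (h : WIn G T u v) : WIn G T' u v := by
  obtain ⟨p, hp⟩ := h
  exact ⟨p, fun x hx => hT (hp _ hx)⟩

lemma WIn.single (hu : u ∈ T) (hv : v ∈ T) (h : G.Adj u v) : WIn G T u v :=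
  ⟨Walk.cons h Walk.nil, by intro x hx; simp at hx; rcases hx with rfl | rfl <;> assumption⟩

lemma WIn.induce_reachable :
    ∀ {u v : V} (p : G.Walk u v) (_ : ∀ w ∈ p.support, w ∈ T) (hu : u ∈ (↑T : Set V))
      (hv : v ∈ (↑T : Set V)), (G.induce (↑T : Set V)).Reachable ⟨u, hu⟩ ⟨v, hv⟩ := by
  intro u v p
  induction p with
  | nil => intro _ hu hv; exact Reachable.refl _
  | @cons u x v h p ih =>
    intro hsupp hu hv
    have hx : x ∈ T := hsupp _ (by simp)
    have hadj : (G.induce (↑T : Set V)).Adj ⟨u, hu⟩ ⟨x, by simpa using hx⟩ := h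
    exact hadj.reachable.trans (ih (fun w hw => hsupp _ (by simp [hw])) _ _)

lemma WIn.connected {c0 : V} (hc0 : c0 ∈ T) (h : ∀ v ∈ T, WIn G T v c0) :
    (G.induce (↑T : Set V)).Connected := by
  rw [connected_iff]
  refine ⟨?_, ⟨⟨c0, by simpa using hc0⟩⟩⟩
  rintro ⟨a, ha⟩ ⟨b, hb⟩
  have h1 := h a (by simpa using ha)
  have h2 := h b (by simpa using hb)
  obtain ⟨p, hp⟩ := h1.trans h2.symm
  exact WIn.induce_reachable p hp _ _

lemma merge_step (cover : ∀ u v : V, G.Adj u v → u ∈ T ∨ v ∈ T) (c0 : V) :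
    ∀ (n : ℕ) (u v : V) (p : G.Walk u v), p.length ≤ n → WIn G T c0 u → v ∈ T →
      ¬ WIn G T c0 v →
      ∃ w, w ∉ T ∧ ∃ a b : V, G.Adj a w ∧ G.Adj w b ∧ WIn G T c0 a ∧ b ∈ T ∧
        ¬ WIn G T c0 b := by
  intro n
  induction n with
  | zero =>
    intro u v p hlen hu hv hnv
    cases p with
    | nil => exact absurd hu hnv
    | cons h q => simp [Walk.length_cons] at hlen
  | succ n ih =>
    intro u v p hlen hu hv hnv
    cases p with
    | nil => exact absurd hu hnv
    | @cons _ x _ h q =>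
      by_cases hx : x ∈ T
      · exact ih x v q (by simpa [Walk.length_cons] using hlen)
          (hu.trans (WIn.single hu.right_mem hx h)) hv hnv
      · cases q with
        | nil => exact absurd hv hx
        | @cons _ y _ h2 r =>
          have hy : y ∈ T := (cover x y h2).resolve_left hx
          by_cases hyw : WIn G T c0 y
          · exact ih y v r (by simp [Walk.length_cons] at hlen ⊢; omega) hyw hv hnv
          · exact ⟨x, hx, u, y, h, h2, hu, hy, hyw⟩

open scoped Classical in
lemma augment (hGc : G.Preconnected) (C : Finset V) (c0 : V) (hc0C : c0 ∈ C) :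
    ∀ (k : ℕ) (T : Finset V),
      (C.filter (fun c => ¬ WIn G T c0 c)).card ≤ k →
      (∀ u v : V, G.Adj u v → u ∈ T ∨ v ∈ T) → C ⊆ T →
      (∀ v ∈ T, ∃ c ∈ C, WIn G T v c) →
      ∃ T' : Finset V, T ⊆ T' ∧
        T'.card ≤ T.card + (C.filter (fun c => ¬ WIn G T c0 c)).card ∧
        (∀ u v : V, G.Adj u v → u ∈ T' ∨ v ∈ T') ∧
        (G.induce (↑T' : Set V)).Connected := by
  have base : ∀ (T : Finset V), (∀ u v : V, G.Adj u v → u ∈ T ∨ v ∈ T) → C ⊆ T →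
      (∀ v ∈ T, ∃ c ∈ C, WIn G T v c) → (∀ c ∈ C, WIn G T c0 c) →
      ∃ T' : Finset V, T ⊆ T' ∧
        T'.card ≤ T.card + (C.filter (fun c => ¬ WIn G T c0 c)).card ∧
        (∀ u v : V, G.Adj u v → u ∈ T' ∨ v ∈ T') ∧
        (G.induce (↑T' : Set V)).Connected := by
    intro T cover hCT rep hall
    refine ⟨T, Finset.Subset.refl _, Nat.le_add_right _ _, cover, ?_⟩
    refine WIn.connected (hCT hc0C) (fun v hv => ?_)
    obtain ⟨c, hcC, hvc⟩ := rep v hv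
    exact hvc.trans (hall c hcC).symm
  intro k
  induction k with
  | zero =>
    intro T hk cover hCT rep
    refine base T cover hCT rep (fun c hc => ?_)
    by_contra hn
    have hmem : c ∈ C.filter (fun c => ¬ WIn G T c0 c) := Finset.mem_filter.2 ⟨hc, hn⟩
    rw [Finset.card_eq_zero.1 (Nat.le_zero.1 hk)] at hmem
    exact absurd hmem (Finset.notMem_empty c)
  | succ k ih =>
    intro T hk cover hCT rep
    by_cases hall : ∀ c ∈ C, WIn G T c0 c
    · exact base T cover hCT rep hall
    · push_neg at hall
      obtain ⟨c2, hc2C, hnc2⟩ := hall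
      have hc0T : c0 ∈ T := hCT hc0C
      obtain ⟨p⟩ := hGc c0 c2
      obtain ⟨w, hwT, a, b, haw, hwb, ha, hbT, hnb⟩ :=
        merge_step cover c0 p.length c0 c2 p le_rfl (WIn.refl hc0T) (hCT hc2C) hnc2
      set T1 := insert w T with hT1
      have hsub : T ⊆ T1 := Finset.subset_insert _ _
      have cover1 : ∀ u v : V, G.Adj u v → u ∈ T1 ∨ v ∈ T1 :=
        fun u v h => (cover u v h).imp (fun h => hsub h) (fun h => hsub h)
      have hwinb : WIn G T1 w b :=
        WIn.single (Finset.mem_insert_self _ _) (hsub hbT) hwb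
      have rep1 : ∀ v ∈ T1, ∃ c ∈ C, WIn G T1 v c := by
        intro v hv
        rcases Finset.mem_insert.1 hv with rfl | hv
        · obtain ⟨c, hcC, hbc⟩ := rep b hbT
          exact ⟨c, hcC, hwinb.trans (hbc.mono hsub)⟩
        · obtain ⟨c, hcC, hvc⟩ := rep v hv
          exact ⟨c, hcC, hvc.mono hsub⟩
      obtain ⟨cb, hcbC, hbcb⟩ := rep b hbT
      have hcb_old : ¬ WIn G T c0 cb := fun h => hnb (h.trans hbcb.symm)
      have hcb_new : WIn G T1 c0 cb :=
        (((ha.mono hsub).trans (WIn.single (hsub ha.right_mem)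
          (Finset.mem_insert_self _ _) haw)).trans hwinb).trans (hbcb.mono hsub)
      have hssub : C.filter (fun c => ¬ WIn G T1 c0 c) ⊂
          C.filter (fun c => ¬ WIn G T c0 c) := by
        constructor
        · intro c hc
          rw [Finset.mem_filter] at hc ⊢
          exact ⟨hc.1, fun h => hc.2 (h.mono hsub)⟩
        · intro hcon
          have := hcon (Finset.mem_filter.2 ⟨hcbC, hcb_old⟩)
          exact (Finset.mem_filter.1 this).2 hcb_new
      have hlt := Finset.card_lt_card hssub
      obtain ⟨T', hsub', hcard', cover', conn'⟩ := ih T1 (by omega) cover1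
        (hCT.trans hsub) rep1
      refine ⟨T', hsub.trans hsub', ?_, cover', conn'⟩
      have hc1 : T1.card = T.card + 1 := Finset.card_insert_of_notMem hwT
      omega

end WIn

section Identify

variable {V : Type*} [DecidableEq V] {G : SimpleGraph V} {X : Finset V}

/-- Projection of `V` onto the vertex set of the identified graph. -/
noncomputable def projX (X : Finset V) (v : V) : Option {v : V // v ∉ X} :=
  if h : v ∈ X then none else some ⟨v, h⟩

lemma identify_connected (hG : G.Connected) (hX : X.Nonempty) :
    (identify G X).Connected := by
  have key : ∀ u v : V, (identify G X).Reachable (projX X u) (projX X v) := by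
    intro u v
    obtain ⟨p⟩ := hG.preconnected u v
    induction p with
    | nil => exact Reachable.refl _
    | @cons u x v h p ih =>
      refine Reachable.trans ?_ ih
      unfold projX
      by_cases hu : u ∈ X <;> by_cases hx : x ∈ X <;> simp [hu, hx]
      · exact Adj.reachable ⟨u, hu, h⟩
      · exact Adj.reachable ⟨x, hx, h⟩
      · exact Adj.reachable h
  obtain ⟨x0, hx0⟩ := hX
  rw [connected_iff]
  refine ⟨?_, ⟨none⟩⟩
  rintro (_ | a) (_ | b)
  · exact Reachable.refl _
  · have := key x0 ↑b
    simpa [projX, hx0, b.2] using this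
  · have := key ↑a x0
    simpa [projX, hx0, a.2] using this
  · have := key ↑a ↑b
    simpa [projX, a.2, b.2] using this

end Identify

/-- For `G` connected and `X ⊆ V(G)` nonempty, `cvc(G) ≤ cvc(G_X) + 2|X|`,
where `G_X` is obtained from `G` by identifying the vertices of `X` into a single vertex. -/
theorem stmt_11 {V : Type*} [Fintype V] [DecidableEq V] (G : SimpleGraph V)
    (X : Finset V) (hG : G.Connected) (hX : X.Nonempty) :
    cvcNum G ≤ cvcNum (identify G X) + 2 * X.card := by
  classical
  obtain ⟨x0, hx0⟩ := hX
  -- a minimum connected vertex cover of the identified graph exists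
  have hne : {n | ∃ S : Finset (Option {v : V // v ∉ X}),
      (∀ u v, (identify G X).Adj u v → u ∈ S ∨ v ∈ S) ∧
      ((identify G X).induce (↑S : Set (Option {v : V // v ∉ X}))).Connected ∧
      S.card = n}.Nonempty := by
    refine ⟨Finset.univ.card, Finset.univ, fun u v _ => Or.inl (Finset.mem_univ _), ?_, rfl⟩
    rw [Finset.coe_univ]
    exact (induceUnivIso _).connected_iff.2 (identify_connected hG ⟨x0, hx0⟩)
  obtain ⟨S, hScov, hSconn, hScard⟩ : ∃ S : Finset (Option {v : V // v ∉ X}),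
      (∀ u v, (identify G X).Adj u v → u ∈ S ∨ v ∈ S) ∧
      ((identify G X).induce (↑S : Set (Option {v : V // v ∉ X}))).Connected ∧
      S.card = cvcNum (identify G X) := Nat.sInf_mem hne
  obtain ⟨⟨s0, hs0⟩⟩ := hSconn.nonempty
  have hs0S : s0 ∈ S := Finset.mem_coe.1 hs0
  set g : Option {v : V // v ∉ X} → V := fun o => o.elim x0 Subtype.val with hg
  set T0 : Finset V := X ∪ S.image g with hT0
  set C : Finset V := insert (g s0) X with hC
  have hXT0 : X ⊆ T0 := Finset.subset_union_left
  have himg : ∀ o ∈ S, g o ∈ T0 := fun o ho =>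
    Finset.mem_union_right _ (Finset.mem_image_of_mem g ho)
  have hCT0 : C ⊆ T0 := Finset.insert_subset_iff.2 ⟨himg s0 hs0S, hXT0⟩
  have hx0C : x0 ∈ C := Finset.mem_insert_of_mem hx0
  -- T0 is a vertex cover of G
  have cover0 : ∀ u v : V, G.Adj u v → u ∈ T0 ∨ v ∈ T0 := by
    intro u v huv
    by_cases hu : u ∈ X
    · exact Or.inl (hXT0 hu)
    by_cases hv : v ∈ X
    · exact Or.inr (hXT0 hv)
    have hadj : (identify G X).Adj (some ⟨u, hu⟩) (some ⟨v, hv⟩) := huv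
    rcases hScov _ _ hadj with h | h
    · exact Or.inl (himg _ h)
    · exact Or.inr (himg _ h)
  -- every vertex of T0 is joined within T0 to some vertex of C
  have aux : ∀ (o t : ↥(↑S : Set (Option {v : V // v ∉ X})))
      (p : ((identify G X).induce (↑S : Set (Option {v : V // v ∉ X}))).Walk o t),
      g t.val ∈ C → ∀ (u : {v : V // v ∉ X}), o.val = some u →
      ∃ c ∈ C, WIn G T0 (↑u) c := by
    intro o t p
    induction p with
    | @nil o1 =>
      intro hc u hu
      rw [hu] at hc
      refine ⟨↑u, hc, WIn.refl ?_⟩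
      have hS : (some u : Option {v : V // v ∉ X}) ∈ S := by
        rw [← hu]; exact Finset.mem_coe.1 o1.2
      exact himg _ hS
    | @cons o1 o' t1 h p ih =>
      intro hc u hu
      have hoS : (some u : Option {v : V // v ∉ X}) ∈ S := by
        rw [← hu]; exact Finset.mem_coe.1 o1.2
      have huT : (↑u : V) ∈ T0 := himg _ hoS
      have hadj : (identify G X).Adj (some u) o'.val := by rw [← hu]; exact h
      rcases ho' : o'.val with _ | w
      · rw [ho'] at hadj
        obtain ⟨x, hxX, hux⟩ := hadj
        exact ⟨x, Finset.mem_insert_of_mem hxX, WIn.single huT (hXT0 hxX) hux⟩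
      · rw [ho'] at hadj
        obtain ⟨c, hcC, hwc⟩ := ih hc w ho'
        have hwS : (some w : Option {v : V // v ∉ X}) ∈ S := by
          rw [← ho']; exact Finset.mem_coe.1 o'.2
        exact ⟨c, hcC, (WIn.single huT (himg _ hwS) hadj).trans hwc⟩
  have rep0 : ∀ v ∈ T0, ∃ c ∈ C, WIn G T0 v c := by
    intro v hv
    rcases Finset.mem_union.1 hv with hvX | hvI
    · exact ⟨v, Finset.mem_insert_of_mem hvX, WIn.refl (hXT0 hvX)⟩
    · obtain ⟨o, hoS, rfl⟩ := Finset.mem_image.1 hvI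
      cases o with
      | none => exact ⟨x0, hx0C, WIn.refl (himg _ hoS)⟩
      | some u =>
        obtain ⟨q⟩ := hSconn.preconnected ⟨some u, Finset.mem_coe.2 hoS⟩ ⟨s0, hs0⟩
        exact aux _ _ q (Finset.mem_insert_self _ _) u rfl
  -- augment T0 to a connected vertex cover
  obtain ⟨T', hsub, hcard, cover', conn'⟩ :=
    augment hG.preconnected C x0 hx0C
      ((C.filter (fun c => ¬ WIn G T0 x0 c)).card) T0 le_rfl cover0 hCT0 rep0
  have hle : cvcNum G ≤ T'.card := Nat.sInf_le ⟨T', cover', conn', rfl⟩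
  have hfil : (C.filter (fun c => ¬ WIn G T0 x0 c)).card ≤ X.card := by
    have h1 : C.filter (fun c => ¬ WIn G T0 x0 c) ⊆ C.erase x0 := by
      intro c hc
      rw [Finset.mem_filter] at hc
      refine Finset.mem_erase.2 ⟨?_, hc.1⟩
      rintro rfl
      exact hc.2 (WIn.refl (hXT0 hx0))
    have h2 := Finset.card_le_card h1
    rw [Finset.card_erase_of_mem hx0C] at h2
    have h3 : C.card ≤ X.card + 1 := Finset.card_insert_le _ _
    omega
  have hT0card : T0.card ≤ X.card + S.card := by
    rw [hT0]
    have h1 := Finset.card_union_le X (S.image g)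
    have h2 := Finset.card_image_le (f := g) (s := S)
    omega
  omega
end

section
/- Let G be a finite simple graph and S'' a vertex cover of G such that G[S''] has at least two connected components and G is connected. Then there exists a vertex v ∈ V(G) \ S'' such that G[S'' ∪ {v}] has strictly fewer connected components than G[S'']. -/
open SimpleGraph

private lemma stmt12_aux {V : Type*} (G : SimpleGraph V) (S : Set V)
    (hvc : ∀ u v : V, G.Adj u v → u ∈ S ∨ v ∈ S) :
    ∀ (n : ℕ) {a b : V} (ha : a ∈ S) (hb : b ∈ S) (p : G.Walk a b), p.length = n →
      ¬ (G.induce S).Reachable ⟨a, ha⟩ ⟨b, hb⟩ →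
      ∃ v, v ∉ S ∧ ∃ u w, ∃ (hu : u ∈ S) (hw : w ∈ S), G.Adj u v ∧ G.Adj v w ∧
        ¬ (G.induce S).Reachable ⟨u, hu⟩ ⟨w, hw⟩ := by
  intro n
  induction n using Nat.strong_induction_on with
  | _ n ih =>
    intro a b ha hb p hlen hr
    cases p with
    | nil => exact absurd (Reachable.refl _) hr
    | @cons _ x _ hax p' =>
      by_cases hx : x ∈ S
      · have hadj : (G.induce S).Adj ⟨a, ha⟩ ⟨x, hx⟩ := by simpa using hax
        have hr' : ¬ (G.induce S).Reachable ⟨x, hx⟩ ⟨b, hb⟩ :=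
          fun h => hr (hadj.reachable.trans h)
        exact ih p'.length (by simp [← hlen]) hx hb p' rfl hr'
      · cases p' with
        | nil => exact absurd hb hx
        | @cons _ y _ hxy q =>
          have hy : y ∈ S := (hvc x y hxy).resolve_left hx
          by_cases hray : (G.induce S).Reachable ⟨a, ha⟩ ⟨y, hy⟩
          · have hr' : ¬ (G.induce S).Reachable ⟨y, hy⟩ ⟨b, hb⟩ :=
              fun h => hr (hray.trans h)
            exact ih q.length (by simp [← hlen]) hy hb q rfl hr'
          · exact ⟨x, hx, a, y, ha, hy, hax, hxy, hray⟩

/-- If `G` is connected, `S''` is a vertex cover of `G`, and `G[S'']` has at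
least two connected components, then there is a vertex `v ∉ S''` such that
`G[S'' ∪ {v}]` has strictly fewer connected components. -/
theorem stmt_12 {V : Type*} [Fintype V] [DecidableEq V] (G : SimpleGraph V)
    (S : Finset V) (hG : G.Connected)
    (hvc : ∀ u v : V, G.Adj u v → u ∈ S ∨ v ∈ S)
    (h2 : 2 ≤ Nat.card (G.induce (↑S : Set V)).ConnectedComponent) :
    ∃ v : V, v ∉ S ∧
      Nat.card (G.induce (↑(insert v S) : Set V)).ConnectedComponent <
        Nat.card (G.induce (↑S : Set V)).ConnectedComponent := by
  -- find two vertices of S in different components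
  have hnt : Nontrivial (G.induce (↑S : Set V)).ConnectedComponent :=
    Finite.one_lt_card_iff_nontrivial.mp (by omega)
  obtain ⟨c, d, hcd⟩ := hnt
  obtain ⟨⟨a, ha⟩, rfl⟩ := c.exists_rep
  obtain ⟨⟨b, hb⟩, rfl⟩ := d.exists_rep
  have hrab : ¬ (G.induce (↑S : Set V)).Reachable ⟨a, ha⟩ ⟨b, hb⟩ :=
    fun h => hcd (ConnectedComponent.eq.mpr h)
  obtain ⟨p⟩ := hG.preconnected a b
  obtain ⟨v, hv, u, w, hu, hw, hadjuv, hadjvw, hruw⟩ :=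
    stmt12_aux G (↑S : Set V) (fun u v h => by exact_mod_cast hvc u v h)
      p.length ha hb p rfl hrab
  have hvS : v ∉ S := by exact_mod_cast hv
  refine ⟨v, hvS, ?_⟩
  have hsub : (↑S : Set V) ⊆ (↑(insert v S) : Set V) := by
    intro x hx; simp_all [Finset.mem_insert]
  let f := (G.induceHomOfLE hsub).toHom
  let F := ConnectedComponent.map f
  have hvmem : v ∈ (↑(insert v S) : Set V) := by simp
  -- surjective
  have hsurj : Function.Surjective F := by
    intro c
    obtain ⟨⟨x, hx⟩, rfl⟩ := c.exists_rep
    rcases (by simpa using hx : x = v ∨ x ∈ S) with rfl | hxS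
    · refine ⟨(G.induce (↑S : Set V)).connectedComponentMk ⟨u, hu⟩, ?_⟩
      simp only [F, ConnectedComponent.map_mk]
      apply ConnectedComponent.eq.mpr
      have : (G.induce (↑(insert x S) : Set V)).Adj ⟨u, hsub hu⟩ ⟨x, hx⟩ := by
        simpa using hadjuv
      exact this.reachable
    · exact ⟨(G.induce (↑S : Set V)).connectedComponentMk ⟨x, hxS⟩, rfl⟩
  -- not injective
  have hninj : ¬ Function.Injective F := by
    intro hinj
    apply hruw
    apply ConnectedComponent.eq.mp
    apply hinj
    simp only [F, ConnectedComponent.map_mk]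
    apply ConnectedComponent.eq.mpr
    have h1 : (G.induce (↑(insert v S) : Set V)).Adj ⟨u, hsub hu⟩ ⟨v, hvmem⟩ := by
      simpa using hadjuv
    have h2 : (G.induce (↑(insert v S) : Set V)).Adj ⟨v, hvmem⟩ ⟨w, hsub hw⟩ := by
      simpa using hadjvw
    exact h1.reachable.trans h2.reachable
  have hle := Nat.card_le_card_of_surjective F hsurj
  refine lt_of_le_of_ne hle ?_
  intro heq
  exact hninj ((Nat.bijective_iff_surjective_and_card F).mpr ⟨hsurj, heq.symm⟩).injective
end
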